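/- Let B be a skew brace such that B³ = 0, and let Z_n(B²,+) denote the n-th term of the upper central series of the additive group (B²,+). Then Z_n(B²,+) is an ideal of B for every n ≥ 0: it is a normal subgroup of (B,+), a normal subgroup of (B,·), and λ-invariant. -/

import Mathlib

/-- A (left) skew brace: a set with two group structures `(B,+)` and `(B,·)`
satisfying `a·(b+c) = a·b - a + a·c`. -/
class SkewBrace (B : Type*) extends AddGroup B, Group B where
  mul_add_compat : ∀ a b c : B, a * (b + c) = a * b - a + a * c

namespace SkewBrace

variable {B : Type*} [SkewBrace B]

/-- The star product `a ∗ b = -a + a·b - b`. -/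
def star (a b : B) : B := -a + a * b - b

/-- For subsets `X, Y ⊆ B`, `X ∗ Y` is the additive subgroup generated by
all `x ∗ y` with `x ∈ X`, `y ∈ Y`. -/
def starSet (X Y : Set B) : AddSubgroup B :=
  AddSubgroup.closure (Set.image2 star X Y)

/-- The left series, indexed so that `leftSeries B n = B^{n+1}`:
`leftSeries B 0 = B¹ = B` and `leftSeries B (n+1) = B ∗ leftSeries B n`. -/
def leftSeries (B : Type*) [SkewBrace B] : ℕ → AddSubgroup B
  | 0 => ⊤
  | n + 1 => starSet Set.univ (leftSeries B n)

/-- The right series, indexed so that `rightSeries B n = B^{(n+1)}`: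
`rightSeries B 0 = B^{(1)} = B` and `rightSeries B (n+1) = (rightSeries B n) ∗ B`. -/
def rightSeries (B : Type*) [SkewBrace B] : ℕ → AddSubgroup B
  | 0 => ⊤
  | n + 1 => starSet (rightSeries B n : Set B) Set.univ

end SkewBrace

namespace SkewBrace

/-- The `n`-th term of the upper central series of the additive group `(B²,+)`,
viewed as a subset of `B`. -/
def upperCentralSet (B : Type*) [SkewBrace B] (n : ℕ) : Set B :=
  {x : B | ∃ hx : x ∈ leftSeries B 1,
    Multiplicative.ofAdd (⟨x, hx⟩ : ↥(leftSeries B 1)) ∈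
      upperCentralSeries (Multiplicative ↥(leftSeries B 1)) n}
end SkewBrace


namespace SkewBrace

variable {B : Type*} [SkewBrace B]

lemma one_eq_zero : (1 : B) = 0 := by
  have h := mul_add_compat (1 : B) 0 0
  simp only [one_mul, add_zero] at h
  simp [sub_eq_add_neg] at h
  exact h

lemma star_mem (a b : B) : star a b ∈ leftSeries B 1 := by
  show star a b ∈ starSet Set.univ ((⊤ : AddSubgroup B) : Set B)
  exact AddSubgroup.subset_closure ⟨a, trivial, b, trivial, rfl⟩

lemma mul_add' (a b c : B) : a * (b + c) = a * b - a + a * c := mul_add_compat a b c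

lemma star_conj (a b c : B) : b + star a c - b = -(star a b) + star a (b + c) := by
  unfold star
  rw [mul_add' a b c]
  simp [sub_eq_add_neg, add_assoc]

lemma add_conj_mem {x : B} (hx : x ∈ leftSeries B 1) (b : B) :
    b + x - b ∈ leftSeries B 1 := by
  have hx' : x ∈ AddSubgroup.closure (Set.image2 star Set.univ ((⊤ : AddSubgroup B) : Set B)) := hx
  induction hx' using AddSubgroup.closure_induction with
  | mem y hy =>
      obtain ⟨a, -, c, -, rfl⟩ := hy
      rw [star_conj]
      exact AddSubgroup.add_mem _ (AddSubgroup.neg_mem _ (star_mem a b)) (star_mem a (b + c))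
  | zero => simpa using (leftSeries B 1).zero_mem
  | add y z hy hz hy' hz' =>
      have : b + (y + z) - b = (b + y - b) + (b + z - b) := by
        simp [sub_eq_add_neg, add_assoc]
      rw [this]; exact AddSubgroup.add_mem _ (hy' hy) (hz' hz)
  | neg y hy hy' =>
      have : b + (-y) - b = -(b + y - b) := by
        simp [sub_eq_add_neg, add_assoc]
      rw [this]; exact AddSubgroup.neg_mem _ (hy' hy)

variable (h3 : leftSeries B 2 = ⊥)
include h3

lemma star_eq_zero {x : B} (hx : x ∈ leftSeries B 1) (b : B) : star b x = 0 := by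
  have : star b x ∈ leftSeries B 2 := by
    show star b x ∈ starSet Set.univ ((leftSeries B 1 : AddSubgroup B) : Set B)
    exact AddSubgroup.subset_closure ⟨b, trivial, x, hx, rfl⟩
  rw [h3] at this
  exact this

lemma mul_eq_add' {x : B} (hx : x ∈ leftSeries B 1) (b : B) : b * x = b + x := by
  have h := star_eq_zero h3 hx b
  unfold star at h
  have : b * x - x = b := by
    have := congrArg (fun t => b + t) h
    simpa [add_assoc, sub_eq_add_neg] using this
  calc b * x = b * x - x + x := by simp
  _ = b + x := by rw [this]

lemma mul_conj_eq {x : B} (hx : x ∈ leftSeries B 1) (b : B) :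
    b * x * b⁻¹ = b + (x + star x b⁻¹) - b := by
  have hxb : x * b⁻¹ = (x + star x b⁻¹) + b⁻¹ := by
    unfold star; simp [sub_eq_add_neg, add_assoc]
  have hmem : x + star x b⁻¹ ∈ leftSeries B 1 :=
    AddSubgroup.add_mem _ hx (star_mem x b⁻¹)
  rw [mul_assoc, hxb, mul_add' b, mul_eq_add' h3 hmem b, mul_inv_cancel, one_eq_zero,
    add_zero]

lemma mul_conj_mem {x : B} (hx : x ∈ leftSeries B 1) (b : B) :
    b * x * b⁻¹ ∈ leftSeries B 1 := by
  rw [mul_conj_eq h3 hx b]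
  exact add_conj_mem (AddSubgroup.add_mem _ hx (star_mem x b⁻¹)) b

lemma inv_eq_neg' {x : B} (hx : x ∈ leftSeries B 1) : x⁻¹ = -x := by
  have : x * (-x) = 1 := by
    rw [mul_eq_add' h3 ((leftSeries B 1).neg_mem hx) x, one_eq_zero, add_neg_cancel]
  exact (eq_inv_of_mul_eq_one_right this).symm


end SkewBrace

open SkewBrace in
/-- If `B³ = 0`, then `Z_n(B²,+)` is an ideal of `B`: it is a normal subgroup of `(B,+)`,
a normal subgroup of `(B,·)`, and `λ`-invariant. -/
theorem upperCentral_isIdeal (B : Type*) [SkewBrace B]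
    (h3 : leftSeries B 2 = ⊥) :
    ∀ n : ℕ, ∃ (Z : AddSubgroup B) (Z' : Subgroup B),
      (Z : Set B) = upperCentralSet B n ∧
      (Z' : Set B) = upperCentralSet B n ∧
      (∀ x ∈ Z, ∀ b : B, b + x - b ∈ Z) ∧
      (∀ x ∈ Z', ∀ b : B, b * x * b⁻¹ ∈ Z') ∧
      (∀ b : B, ∀ x ∈ Z, -b + b * x ∈ Z) := by
  intro n
  set H := leftSeries B 1 with hHdef
  set U := upperCentralSeries (Multiplicative ↥H) n with hUdef
  -- the additive subgroup
  have Zzero : (0 : B) ∈ upperCentralSet B n :=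
    ⟨H.zero_mem, (upperCentralSeries _ n).one_mem⟩
  have Zadd : ∀ {x y : B}, x ∈ upperCentralSet B n → y ∈ upperCentralSet B n →
      x + y ∈ upperCentralSet B n := by
    rintro x y ⟨hx, hx'⟩ ⟨hy, hy'⟩
    exact ⟨H.add_mem hx hy, (upperCentralSeries _ n).mul_mem hx' hy'⟩
  have Zneg : ∀ {x : B}, x ∈ upperCentralSet B n → -x ∈ upperCentralSet B n := by
    rintro x ⟨hx, hx'⟩
    exact ⟨H.neg_mem hx, (upperCentralSeries _ n).inv_mem hx'⟩
  let Z : AddSubgroup B :=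
    { carrier := upperCentralSet B n
      zero_mem' := Zzero
      add_mem' := Zadd
      neg_mem' := Zneg }
  -- the multiplicative subgroup
  let Z' : Subgroup B :=
    { carrier := upperCentralSet B n
      one_mem' := one_eq_zero (B := B) ▸ Zzero
      mul_mem' := by
        rintro x y hx hy
        have := Zadd hx hy
        rwa [← mul_eq_add' h3 hy.1 x] at this
      inv_mem' := by
        rintro x hx
        have := Zneg hx
        rwa [← inv_eq_neg' h3 hx.1] at this }
  refine ⟨Z, Z', rfl, rfl, ?_, ?_, ?_⟩
  · -- additive normality
    rintro x ⟨hx, hx'⟩ b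
    refine ⟨add_conj_mem hx b, ?_⟩
    let φ : ↥H ≃+ ↥H :=
      { toFun := fun g => ⟨b + g - b, add_conj_mem g.2 b⟩
        invFun := fun g => ⟨-b + g + b, by simpa [sub_eq_add_neg] using add_conj_mem g.2 (-b)⟩
        left_inv := fun g => by ext; simp [sub_eq_add_neg, add_assoc]
        right_inv := fun g => by ext; simp [sub_eq_add_neg, add_assoc]
        map_add' := fun g h => by ext; simp [sub_eq_add_neg, add_assoc] }
    let e := AddEquiv.toMultiplicative φ
    have hcm : Multiplicative.ofAdd (⟨x, hx⟩ : ↥H) ∈ U.comap e := by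
      rw [hUdef]
      exact (SetLike.ext_iff.mp (Subgroup.comap_upperCentralSeries e n) _).mpr hx'
    exact Subgroup.mem_comap.mp hcm
  · -- multiplicative normality
    rintro x ⟨hx, hx'⟩ b
    refine ⟨mul_conj_mem h3 hx b, ?_⟩
    let ψ : ↥H ≃+ ↥H :=
      { toFun := fun g => ⟨b * g * b⁻¹, mul_conj_mem h3 g.2 b⟩
        invFun := fun g => ⟨b⁻¹ * g * b, by simpa using mul_conj_mem h3 g.2 b⁻¹⟩
        left_inv := fun g => by ext; simp [mul_assoc]
        right_inv := fun g => by ext; simp [mul_assoc]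
        map_add' := fun g h => by
          ext
          show b * ((g : B) + h) * b⁻¹ = b * g * b⁻¹ + b * h * b⁻¹
          rw [← mul_eq_add' h3 h.2 (g : B),
            ← mul_eq_add' h3 (mul_conj_mem h3 h.2 b) (b * (g : B) * b⁻¹)]
          group }
    let e := AddEquiv.toMultiplicative ψ
    have hcm : Multiplicative.ofAdd (⟨x, hx⟩ : ↥H) ∈ U.comap e := by
      rw [hUdef]
      exact (SetLike.ext_iff.mp (Subgroup.comap_upperCentralSeries e n) _).mpr hx'
    exact Subgroup.mem_comap.mp hcm
  · -- λ-invariance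
    rintro b x ⟨hx, hx'⟩
    rw [mul_eq_add' h3 hx b, neg_add_cancel_left]
    exact ⟨hx, hx'⟩
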